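/- Let f : ℝ^n → ℝ be convex and continuously differentiable, x* a minimizer of f over {x : Ax = b}, and x : [t₀, ∞) → ℝ^n a bounded continuous curve such that D_f(x*, x(t)) = f(x*) - f(x(t)) - ⟨∇f(x(t)), x* - x(t)⟩ → 0 as t → ∞. Then ∇f(x(t)) → ∇f(x*) as t → ∞. -/

import Mathlib

open Filter Topology
open scoped RealInnerProductSpace

private lemma grad_ineq {n : ℕ} {f : EuclideanSpace ℝ (Fin n) → ℝ}
    {f' : EuclideanSpace ℝ (Fin n) → EuclideanSpace ℝ (Fin n)}
    (hconv : ConvexOn ℝ Set.univ f)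
    (hdiff : ∀ x, HasGradientAt f (f' x) x)
    (y z : EuclideanSpace ℝ (Fin n)) : f y + ⟪f' y, z - y⟫ ≤ f z := by
  set g : ℝ → ℝ := fun s => f (y + s • (z - y)) with hgdef
  have hg : ConvexOn ℝ Set.univ g := by
    have h := hconv.comp_affineMap (AffineMap.lineMap y z)
    have : ((AffineMap.lineMap y z : ℝ →ᵃ[ℝ] EuclideanSpace ℝ (Fin n))) ⁻¹' Set.univ
        = (Set.univ : Set ℝ) := Set.preimage_univ
    rw [this] at h
    have e : g = f ∘ ⇑(AffineMap.lineMap y z : ℝ →ᵃ[ℝ] EuclideanSpace ℝ (Fin n)) := by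
      funext s
      simp [hgdef, AffineMap.lineMap_apply, add_comm, vsub_eq_sub, vadd_eq_add]
    rw [e]; exact h
  have h2 : HasDerivAt (fun s : ℝ => y + s • (z - y)) (z - y) 0 := by
    simpa using ((hasDerivAt_id (0 : ℝ)).smul_const (z - y)).const_add y
  have h1 : HasFDerivAt f (InnerProductSpace.toDual ℝ _ (f' y))
      ((fun s : ℝ => y + s • (z - y)) 0) := by
    simpa using (hdiff y).hasFDerivAt
  have hgd : HasDerivAt g (⟪f' y, z - y⟫) 0 := by
    simpa [hgdef, Function.comp_def] using h1.comp_hasDerivAt 0 h2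
  have hs := hg.le_slope_of_hasDerivAt (Set.mem_univ (0 : ℝ)) (Set.mem_univ (1 : ℝ))
    one_pos hgd
  have hg0 : g 0 = f y := by simp [hgdef]
  have hg1 : g 1 = f z := by simp [hgdef]
  rw [slope_def_field, hg0, hg1] at hs
  simp only [div_one, sub_zero] at hs
  linarith [hs]

theorem stmt_8 {n m : ℕ} (f : EuclideanSpace ℝ (Fin n) → ℝ)
    (f' : EuclideanSpace ℝ (Fin n) → EuclideanSpace ℝ (Fin n))
    (hconv : ConvexOn ℝ Set.univ f)
    (hdiff : ∀ x, HasGradientAt f (f' x) x)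
    (hf'c : Continuous f')
    (A : EuclideanSpace ℝ (Fin n) →L[ℝ] EuclideanSpace ℝ (Fin m))
    (b : EuclideanSpace ℝ (Fin m))
    (xs : EuclideanSpace ℝ (Fin n))
    (hxs : IsMinOn f {x | A x = b} xs) (hxsfeas : A xs = b)
    (t₀ : ℝ) (x : ℝ → EuclideanSpace ℝ (Fin n))
    (hxc : ContinuousOn x (Set.Ici t₀))
    (hxbdd : ∃ M, ∀ t ∈ Set.Ici t₀, ‖x t‖ ≤ M)
    (hbreg :
      Tendsto (fun t => f xs - f (x t) - ⟪f' (x t), xs - x t⟫) atTop (nhds 0)) :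
    Tendsto (fun t => f' (x t)) atTop (nhds (f' xs)) := by
  obtain ⟨M, hM⟩ := hxbdd
  set D : EuclideanSpace ℝ (Fin n) → ℝ :=
    fun y => f xs - f y - ⟪f' y, xs - y⟫ with hDdef
  have hfc : Continuous f := by
    have : Differentiable ℝ f := fun y => (hdiff y).hasFDerivAt.differentiableAt
    exact this.continuous
  have hDc : Continuous D := by
    apply (continuous_const.sub hfc).sub
    exact continuous_inner.comp (hf'c.prodMk (continuous_const.sub continuous_id))
  have hDnonneg : ∀ y, 0 ≤ D y := by
    intro y
    have := grad_ineq hconv hdiff y xs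
    simp only [hDdef]; linarith
  -- key: D y = 0 implies f' y = f' xs
  have key : ∀ y, D y = 0 → f' y = f' xs := by
    intro y hDy
    set g : EuclideanSpace ℝ (Fin n) → ℝ := fun z => f z - ⟪f' y, z⟫ with hgdef
    have hgy : ∀ z, g y ≤ g z := by
      intro z
      have := grad_ineq hconv hdiff y z
      have hinner : ⟪f' y, z - y⟫ = ⟪f' y, z⟫ - ⟪f' y, y⟫ := inner_sub_right _ _ _
      simp only [hgdef]; linarith
    have hgxs : g xs = g y := by
      have h0 : f xs = f y + ⟪f' y, xs - y⟫ := by simp only [hDdef] at hDy; linarith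
      have hinner : ⟪f' y, xs - y⟫ = ⟪f' y, xs⟫ - ⟪f' y, y⟫ := inner_sub_right _ _ _
      simp only [hgdef]; linarith
    have hmin : IsLocalMin g xs := by
      apply Filter.Eventually.of_forall
      intro z
      rw [hgxs]; exact hgy z
    have hgd : HasFDerivAt g
        (InnerProductSpace.toDual ℝ _ (f' xs) - InnerProductSpace.toDual ℝ _ (f' y)) xs := by
      have h1 : HasFDerivAt f (InnerProductSpace.toDual ℝ _ (f' xs)) xs := (hdiff xs).hasFDerivAt
      have h2 : HasFDerivAt (fun z : EuclideanSpace ℝ (Fin n) => ⟪f' y, z⟫)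
          (InnerProductSpace.toDual ℝ _ (f' y)) xs :=
        (InnerProductSpace.toDual ℝ _ (f' y)).hasFDerivAt
      exact h1.sub h2
    have hz := hmin.hasFDerivAt_eq_zero hgd
    have hz' : ∀ w, ⟪f' xs - f' y, w⟫ = (0 : ℝ) := by
      intro w
      have := DFunLike.congr_fun hz w
      simpa [inner_sub_left] using this
    have := hz' (f' xs - f' y)
    rw [inner_self_eq_zero, sub_eq_zero] at this
    exact this.symm
  -- main argument
  rw [Metric.tendsto_atTop]
  intro ε hε
  set K : Set (EuclideanSpace ℝ (Fin n)) := Metric.closedBall 0 M with hKdef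
  have hKcomp : IsCompact K := isCompact_closedBall 0 M
  have hxK : ∀ t ∈ Set.Ici t₀, x t ∈ K := by
    intro t ht
    simpa [hKdef, Metric.mem_closedBall, dist_zero_right] using hM t ht
  set C : Set (EuclideanSpace ℝ (Fin n)) := {y ∈ K | ε ≤ ‖f' y - f' xs‖} with hCdef
  have hCcomp : IsCompact C := by
    apply hKcomp.of_isClosed_subset
    · apply IsClosed.inter hKcomp.isClosed
      exact isClosed_le continuous_const ((hf'c.sub continuous_const).norm)
    · exact Set.sep_subset _ _
  by_cases hC : C.Nonempty
  · obtain ⟨y₀, hy₀C, hmin⟩ := hCcomp.exists_isMinOn hC hDc.continuousOn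
    have hδpos : 0 < D y₀ := by
      rcases lt_or_eq_of_le (hDnonneg y₀) with h | h
      · exact h
      · exfalso
        have := key y₀ h.symm
        have hy₀ := hy₀C.2
        rw [this] at hy₀
        simp at hy₀
        linarith
    rw [Metric.tendsto_atTop] at hbreg
    obtain ⟨N₁, hN₁⟩ := hbreg (D y₀) hδpos
    refine ⟨max t₀ N₁, fun t ht => ?_⟩
    have ht₀ : t ∈ Set.Ici t₀ := le_trans (le_max_left _ _) ht
    have hDxt : D (x t) < D y₀ := by
      have := hN₁ t (le_trans (le_max_right _ _) ht)
      rw [Real.dist_eq, sub_zero] at this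
      calc D (x t) ≤ |D (x t)| := le_abs_self _
        _ < D y₀ := this
    rw [dist_eq_norm]
    by_contra hcon
    push_neg at hcon
    have hxtC : x t ∈ C := ⟨hxK t ht₀, hcon⟩
    exact absurd (hmin hxtC) (not_le.mpr hDxt)
  · refine ⟨t₀, fun t ht => ?_⟩
    rw [dist_eq_norm]
    by_contra hcon
    push_neg at hcon
    exact hC ⟨x t, hxK t ht, hcon⟩
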